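/- arXiv:2007.00167 — 2 statements merged into one kernel-verified Lean document; each statement's English description precedes it below -/
import Mathlib

section
/- For every type T equipped with a distinguished element t : T and an equivalence e : T ≃ T, there exists a unique map f : ℤ → T such that f 0 = t and f (z + 1) = e (f z) for every integer z. -/
/-- Set-level content of `ℤisInitial`: the integers, with point `0` and
self-equivalence the successor, form the initial ℤ-algebra: for every type `T`
with a point `t` and a self-equivalence `e`, there is a unique map `f : ℤ → T`
with `f 0 = t` commuting with the successor and `e`. -/
theorem intIsInitial {T : Type*} (t : T) (e : T ≃ T) :
    ∃! f : ℤ → T, f 0 = t ∧ ∀ z : ℤ, f (z + 1) = e (f z) := by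
  refine ⟨fun z => ((e : Equiv.Perm T) ^ z) t, ⟨by simp, fun z => ?_⟩, ?_⟩
  · show (e ^ (z + 1)) t = e ((e ^ z) t)
    rw [add_comm, zpow_add, zpow_one]; rfl
  · rintro g ⟨h0, hs⟩
    funext z
    induction z using Int.induction_on with
    | zero => simpa using h0
    | succ n ih =>
      rw [hs, ih]
      show _ = (e ^ ((n : ℤ) + 1)) t
      rw [add_comm, zpow_add, zpow_one]; rfl
    | pred n ih =>
      have h1 := hs (-(n : ℤ) - 1)
      rw [sub_add_cancel] at h1
      have h2 : g (-(n : ℤ) - 1) = e.symm (g (-(n : ℤ))) := by rw [h1]; simp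
      rw [h2, ih]
      show e.symm ((e ^ (-(n : ℤ))) t) = (e ^ (-(n : ℤ) - 1)) t
      rw [sub_eq_add_neg, add_comm, zpow_add, zpow_neg_one]; rfl
end

section
/- The fundamental group of the circle based at the point 1 is isomorphic (as a group) to the additive group of integers ℤ. -/
noncomputable section CircleDeg
open unitInterval Complex Real

namespace CircleDeg

lemma abs_min_sub_min (x b c : ℝ) : |min x b - min x c| ≤ |b - c| := by
  rcases le_total b c with h | h <;>
    rcases le_total x b with h1 | h1 <;> rcases le_total x c with h2 | h2 <;>
      simp [min_eq_left, min_eq_right, *, abs_le] <;>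
      cases abs_cases (b - c) <;> constructor <;> linarith

lemma div_mem_slitPlane {z w : Circle} (h : dist z w < 2) :
    ((z / w : Circle) : ℂ) ∈ Complex.slitPlane := by
  rw [Complex.mem_slitPlane_iff]
  by_contra hc
  push_neg at hc
  obtain ⟨h1, h2⟩ := hc
  have habs : ‖((z / w : Circle) : ℂ)‖ = 1 := by
    simp [Circle.norm_coe]
  have him : ((z / w : Circle) : ℂ).im = 0 := h2
  have hre : ((z / w : Circle) : ℂ).re = -1 := by
    have habs' : |((z / w : Circle) : ℂ).re| = 1 := by
      rw [Complex.abs_re_eq_norm.mpr him]; exact habs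
    cases abs_cases ((z / w : Circle) : ℂ).re <;> linarith
  have hzw : ((z / w : Circle) : ℂ) = -1 := by
    apply Complex.ext
    · rw [hre]; simp
    · rw [him]; simp
  rw [Circle.coe_div] at hzw
  have hwne : (w : ℂ) ≠ 0 := Circle.coe_ne_zero w
  have hz : (z : ℂ) = -(w : ℂ) := by
    field_simp at hzw
    linear_combination hzw
  have : dist z w = 2 := by
    rw [show dist z w = dist (z : ℂ) (w : ℂ) from rfl, Complex.dist_eq, hz]
    have h2w : -(w : ℂ) - w = -(2 * w) := by ring
    rw [h2w]
    simp [Circle.norm_coe]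
  linarith

lemma continuous_arg_div {u v : I → Circle} (hu : Continuous u) (hv : Continuous v)
    (h : ∀ t, dist (u t) (v t) < 2) :
    Continuous fun t => Complex.arg ((u t / v t : Circle) : ℂ) := by
  rw [continuous_iff_continuousAt]
  intro t
  have hc : Continuous fun t => ((u t / v t : Circle) : ℂ) :=
    continuous_subtype_val.comp (hu.div' hv)
  exact ContinuousAt.comp (x := t) (Complex.continuousAt_arg (div_mem_slitPlane (h t)))
    hc.continuousAt

lemma exp_sum {ι : Type*} (s : Finset ι) (h : ι → ℝ) :
    Circle.exp (∑ i ∈ s, h i) = ∏ i ∈ s, Circle.exp (h i) := by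
  classical
  induction s using Finset.induction with
  | empty => simp
  | insert x s hx ih => rw [Finset.sum_insert hx, Finset.prod_insert hx, Circle.exp_add, ih]

lemma exists_lift (f : I → Circle) (hf : Continuous f) (a : ℝ) (ha : Circle.exp a = f 0) :
    ∃ g : I → ℝ, Continuous g ∧ g 0 = a ∧ ∀ t, Circle.exp (g t) = f t := by
  have huc := CompactSpace.uniformContinuous_of_continuous hf
  replace huc := Metric.uniformContinuous_iff.1 huc
  obtain ⟨δ, hδ, hδ2⟩ := huc 2 two_pos
  obtain ⟨n₀, hn₀⟩ := exists_nat_one_div_lt hδ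
  set n : ℕ := n₀ + 1 with hn
  have hnpos : 0 < (n : ℝ) := by positivity
  have key : ∀ a b : I, |(a : ℝ) - b| ≤ 1 / n → dist (f a) (f b) < 2 := by
    intro a b hab
    apply hδ2
    rw [Subtype.dist_eq, Real.dist_eq]
    calc |(a : ℝ) - b| ≤ 1 / n := hab
      _ < δ := by
        have : ((n : ℝ)) = (n₀ : ℝ) + 1 := by push_cast [hn]; ring
        rw [this]; exact hn₀
  set m : ℕ → I → I := fun k t =>
    ⟨min t.1 (k / n), le_min t.2.1 (by positivity), min_le_of_left_le t.2.2⟩ with hm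
  have hmc : ∀ k, Continuous fun t => m k t := fun k =>
    Continuous.subtype_mk (continuous_subtype_val.min continuous_const) _
  have hmd : ∀ k (t : I), dist (f (m (k + 1) t)) (f (m k t)) < 2 := by
    intro k t
    apply key
    have h1 : |min t.1 (((k : ℕ) + 1 : ℕ) / n) - min t.1 ((k : ℕ) / n)|
        ≤ |(((k : ℕ) + 1 : ℕ) : ℝ) / n - ((k : ℕ) : ℝ) / n| := abs_min_sub_min _ _ _
    have h2 : |(((k : ℕ) + 1 : ℕ) : ℝ) / n - ((k : ℕ) : ℝ) / n| = 1 / n := by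
      push_cast
      rw [div_sub_div_same]
      norm_num
    calc |((m (k+1) t : I) : ℝ) - ((m k t : I) : ℝ)|
        = |min t.1 ((k + 1 : ℕ) / n) - min t.1 ((k : ℕ) / n)| := rfl
      _ ≤ _ := h1
      _ = 1 / n := h2
  set g : I → ℝ := fun t =>
    a + ∑ k ∈ Finset.range n, Complex.arg ((f (m (k + 1) t) / f (m k t) : Circle) : ℂ) with hg
  have hgc : Continuous g := by
    apply continuous_const.add
    apply continuous_finset_sum
    intro k _
    exact continuous_arg_div (hf.comp (hmc (k + 1))) (hf.comp (hmc k)) (hmd k)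
  have hm0 : ∀ k, m k 0 = 0 := by
    intro k
    apply Subtype.ext
    show min (0 : ℝ) (k / n) = 0
    exact min_eq_left (by positivity)
  refine ⟨g, hgc, ?_, ?_⟩
  · rw [hg]
    simp only
    have : ∀ k ∈ Finset.range n,
        Complex.arg ((f (m (k + 1) 0) / f (m k 0) : Circle) : ℂ) = 0 := by
      intro k _
      rw [hm0, hm0, div_self']
      simp [Complex.arg_one]
    rw [Finset.sum_congr rfl this]
    simp
  · intro t
    rw [hg]
    simp only
    rw [Circle.exp_add, exp_sum]
    have harg : ∀ k ∈ Finset.range n,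
        Circle.exp (Complex.arg ((f (m (k + 1) t) / f (m k t) : Circle) : ℂ))
          = f (m (k + 1) t) / f (m k t) := fun k _ => Circle.exp_arg _
    rw [Finset.prod_congr rfl harg, Finset.prod_range_div (fun k => f (m k t)) n]
    have hmn : m n t = t := by
      apply Subtype.ext
      show min t.1 ((n : ℝ) / n) = t.1
      rw [div_self hnpos.ne']
      exact min_eq_left t.2.2
    have hm0t : m 0 t = 0 := by
      apply Subtype.ext
      show min t.1 (((0 : ℕ) : ℝ) / n) = 0
      norm_num [min_eq_right t.2.1]
    rw [hmn, hm0t, ha]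
    rw [mul_comm]
    exact div_mul_cancel (f t) (f 0)

lemma lift_unique {g₁ g₂ : I → ℝ} (h₁ : Continuous g₁) (h₂ : Continuous g₂)
    (h0 : g₁ 0 = g₂ 0) (h : ∀ t, Circle.exp (g₁ t) = Circle.exp (g₂ t)) (t : I) :
    g₁ t = g₂ t := by
  set pr : ℝ → I := Set.projIcc 0 1 zero_le_one with hpr
  set F : ℝ → ℝ := fun x => g₁ (pr x) - g₂ (pr x) with hF
  have hprc : Continuous pr := continuous_projIcc
  have hFc : Continuous F := (h₁.comp hprc).sub (h₂.comp hprc)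
  have hFone : ∀ x, ∃ m : ℤ, F x = m * (2 * π) := by
    intro x
    apply Circle.exp_eq_one.mp
    show Circle.exp (g₁ (pr x) - g₂ (pr x)) = 1
    rw [Circle.exp_sub, h (pr x), div_self']
  have hpr0 : pr 0 = 0 := by
    apply Subtype.ext
    rw [hpr, Set.projIcc_left]
    rfl
  have hprt : pr t.1 = t := by
    apply Subtype.ext
    rw [hpr, Set.projIcc_of_mem zero_le_one t.2]
  have hF0 : F 0 = 0 := by
    show g₁ (pr 0) - g₂ (pr 0) = 0
    rw [hpr0, h0, sub_self]
  by_contra hne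
  have hFt : F t.1 ≠ 0 := by
    show g₁ (pr t.1) - g₂ (pr t.1) ≠ 0
    rw [hprt]
    exact sub_ne_zero_of_ne hne
  obtain ⟨mt, hmt⟩ := hFone t.1
  have hmtne : mt ≠ 0 := by
    rintro rfl
    apply hFt
    rw [hmt]; simp
  set c : ℝ := if 0 < mt then π else -π with hc
  have hc_mem : c ∈ Set.uIcc (F 0) (F t.1) := by
    rw [hF0, hmt, Set.mem_uIcc]
    rcases lt_or_ge 0 mt with hmt' | hmt'
    · left
      have h1 : (1 : ℝ) ≤ mt := by exact_mod_cast hmt'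
      rw [hc, if_pos hmt']
      constructor
      · positivity
      · nlinarith [Real.pi_pos]
    · right
      have h1 : (mt : ℝ) ≤ -1 := by
        have h2 : mt ≤ -1 := by omega
        exact_mod_cast h2
      rw [hc, if_neg (not_lt.mpr hmt')]
      refine ⟨?_, ?_⟩ <;> nlinarith [Real.pi_pos]
  obtain ⟨x, -, hx⟩ := intermediate_value_uIcc hFc.continuousOn hc_mem
  obtain ⟨m', hm'⟩ := hFone x
  rw [hm'] at hx
  have : (2 * m' : ℝ) = 1 ∨ (2 * m' : ℝ) = -1 := by
    rcases lt_or_ge 0 mt with hmt' | hmt'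
    · left
      rw [hc, if_pos hmt'] at hx
      have h2 : (2 * (m' : ℝ) - 1) * π = 0 := by linarith
      rcases mul_eq_zero.mp h2 with h3 | h3
      · linarith
      · exact absurd h3 Real.pi_ne_zero
    · right
      rw [hc, if_neg (not_lt.mpr hmt')] at hx
      have h2 : (2 * (m' : ℝ) + 1) * π = 0 := by linarith
      rcases mul_eq_zero.mp h2 with h3 | h3
      · linarith
      · exact absurd h3 Real.pi_ne_zero
  rcases this with h' | h'
  · have : (2 * m' : ℤ) = 1 := by exact_mod_cast h'
    omega
  · have : (2 * m' : ℤ) = -1 := by exact_mod_cast h'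
    omega

lemma deg_exists (p : Path (1 : Circle) 1) :
    ∃ m : ℤ, ∃ g : I → ℝ, Continuous g ∧ g 0 = 0 ∧ (∀ t, Circle.exp (g t) = p t) ∧
      g 1 = m * (2 * π) := by
  obtain ⟨g, hc, h0, hl⟩ := exists_lift p p.continuous 0 (by rw [Circle.exp_zero, p.source])
  obtain ⟨m, hm⟩ := Circle.exp_eq_one.mp (by rw [hl 1, p.target])
  exact ⟨m, g, hc, h0, hl, hm⟩

/-- The degree (winding number) of a loop in the circle. -/
def deg (p : Path (1 : Circle) 1) : ℤ := (deg_exists p).choose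

lemma deg_spec (p : Path (1 : Circle) 1) :
    ∃ g : I → ℝ, Continuous g ∧ g 0 = 0 ∧ (∀ t, Circle.exp (g t) = p t) ∧
      g 1 = deg p * (2 * π) := (deg_exists p).choose_spec

lemma deg_eq {p : Path (1 : Circle) 1} {m : ℤ} {g : I → ℝ} (hc : Continuous g) (h0 : g 0 = 0)
    (hl : ∀ t, Circle.exp (g t) = p t) (h1 : g 1 = m * (2 * π)) : deg p = m := by
  obtain ⟨g', hc', h0', hl', h1'⟩ := deg_spec p
  have he := lift_unique hc' hc (by rw [h0, h0']) (fun t => by rw [hl t, hl' t]) 1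
  have : (deg p : ℝ) * (2 * π) = m * (2 * π) := by rw [← h1', he, h1]
  have h2 : (deg p : ℝ) = m := by
    field_simp [Real.pi_ne_zero] at this
    exact_mod_cast this
  exact_mod_cast h2


lemma deg_eq_of_close {p q : Path (1 : Circle) 1} (h : ∀ t : I, dist (q t) (p t) < 2) :
    deg q = deg p := by
  obtain ⟨g, hc, h0, hl, h1⟩ := deg_spec p
  set g' : I → ℝ := fun t => g t + Complex.arg ((q t / p t : Circle) : ℂ) with hg'
  have hc' : Continuous g' := hc.add (continuous_arg_div q.continuous p.continuous h)
  have h0' : g' 0 = 0 := by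
    show g 0 + Complex.arg ((q 0 / p 0 : Circle) : ℂ) = 0
    rw [h0, q.source, p.source, div_self']
    simp [Complex.arg_one]
  have hl' : ∀ t, Circle.exp (g' t) = q t := by
    intro t
    show Circle.exp (g t + Complex.arg ((q t / p t : Circle) : ℂ)) = q t
    rw [Circle.exp_add, hl t, Circle.exp_arg, mul_comm]
    exact div_mul_cancel (q t) (p t)
  have h1' : g' 1 = deg p * (2 * π) := by
    show g 1 + Complex.arg ((q 1 / p 1 : Circle) : ℂ) = deg p * (2 * π)
    rw [h1, q.target, p.target, div_self']
    simp [Complex.arg_one]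
  exact deg_eq hc' h0' hl' h1'

lemma deg_congr {p q : Path (1 : Circle) 1} (h : p.Homotopic q) : deg p = deg q := by
  obtain ⟨H⟩ := h
  have hH : Continuous fun z : I × I => H z := H.continuous
  have huc := CompactSpace.uniformContinuous_of_continuous hH
  replace huc := Metric.uniformContinuous_iff.1 huc
  obtain ⟨δ, hδ, hδ2⟩ := huc 2 two_pos
  obtain ⟨n₀, hn₀⟩ := exists_nat_one_div_lt hδ
  set N : ℕ := n₀ + 1 with hN
  have hNpos : 0 < (N : ℝ) := by positivity
  set pt : ℕ → I := fun k =>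
    ⟨min ((k : ℝ) / N) 1, le_min (by positivity) zero_le_one, min_le_right _ _⟩ with hpt
  have key : ∀ k : ℕ, deg (H.eval (pt (k + 1))) = deg (H.eval (pt k)) := by
    intro k
    apply deg_eq_of_close
    intro t
    have hd : dist ((pt (k + 1), t) : I × I) ((pt k, t) : I × I) < δ := by
      rw [Prod.dist_eq]
      simp only [dist_self]
      rw [Subtype.dist_eq, Real.dist_eq]
      have hle : |((pt (k + 1) : I) : ℝ) - ((pt k : I) : ℝ)| ≤ 1 / N :=
        calc |min ((((k + 1 : ℕ)) : ℝ) / (N : ℝ)) 1 - min (((k : ℕ) : ℝ) / (N : ℝ)) 1|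
            = |min 1 ((((k + 1 : ℕ)) : ℝ) / (N : ℝ)) - min 1 (((k : ℕ) : ℝ) / (N : ℝ))| := by
              rw [min_comm ((((k + 1 : ℕ)) : ℝ) / (N : ℝ)) 1,
                min_comm (((k : ℕ) : ℝ) / (N : ℝ)) 1]
          _ ≤ |(((k + 1 : ℕ)) : ℝ) / (N : ℝ) - ((k : ℕ) : ℝ) / (N : ℝ)| :=
              abs_min_sub_min _ _ _
          _ = 1 / N := by
              push_cast
              rw [div_sub_div_same]
              norm_num
      have hlt : (1 : ℝ) / N < δ := by
        have hcast : ((N : ℝ)) = (n₀ : ℝ) + 1 := by push_cast [hN]; ring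
        rw [hcast]; exact hn₀
      calc max (|((pt (k + 1) : I) : ℝ) - ((pt k : I) : ℝ)|) 0 ≤ 1 / N := by
            apply max_le hle (by positivity)
        _ < δ := hlt
    exact hδ2 hd
  have main : ∀ k : ℕ, deg (H.eval (pt k)) = deg (H.eval (pt 0)) := by
    intro k
    induction k with
    | zero => rfl
    | succ k ih => rw [key k, ih]
  have hpt0 : pt 0 = 0 := by
    apply Subtype.ext
    show min ((0 : ℕ) / (N : ℝ)) 1 = 0
    norm_num
  have hptN : pt N = 1 := by
    apply Subtype.ext
    show min ((N : ℝ) / N) 1 = 1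
    rw [div_self hNpos.ne']
    norm_num
  have := main N
  rw [hpt0, hptN, H.eval_zero, H.eval_one] at this
  exact this.symm

lemma deg_trans (p q : Path (1 : Circle) 1) : deg (p.trans q) = deg p + deg q := by
  obtain ⟨gp, hpc, hp0, hpl, hp1⟩ := deg_spec p
  obtain ⟨gq, hqc, hq0, hql, hq1⟩ := deg_spec q
  set P : Path (0 : ℝ) (gp 1) :=
    { toFun := gp, continuous_toFun := hpc, source' := hp0, target' := rfl } with hP
  set Q : Path (gp 1) (gp 1 + gq 1) :=
    { toFun := fun t => gp 1 + gq t, continuous_toFun := continuous_const.add hqc,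
      source' := by show gp 1 + gq 0 = gp 1; rw [hq0, add_zero], target' := rfl } with hQ
  set R := P.trans Q with hR
  have hexp1 : Circle.exp (gp 1) = 1 := by rw [hpl 1, p.target]
  have hRl : ∀ t, Circle.exp (R t) = (p.trans q) t := by
    intro t
    rw [hR, Path.trans_apply, Path.trans_apply]
    split_ifs with ht
    · exact hpl _
    · show Circle.exp (gp 1 + gq _) = q _
      rw [Circle.exp_add, hexp1, one_mul]
      exact hql _
  have hR1 : R 1 = ((deg p + deg q : ℤ) : ℝ) * (2 * π) := by
    have hRt : R 1 = gp 1 + gq 1 := R.target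
    rw [hRt, hp1, hq1]
    push_cast
    ring
  exact deg_eq R.continuous R.source hRl hR1

lemma deg_refl : deg (Path.refl (1 : Circle)) = 0 := by
  apply deg_eq (g := fun _ => (0 : ℝ)) continuous_const rfl
  · intro t
    rw [Circle.exp_zero, Path.refl_apply]
  · norm_num

/-- The model loop of winding number `n`. -/
def loopN (n : ℤ) : Path (1 : Circle) 1 where
  toFun := fun t => Circle.exp ((n : ℝ) * (2 * π) * t)
  continuous_toFun := Circle.exp.continuous.comp (continuous_const.mul continuous_subtype_val)
  source' := by
    show Circle.exp ((n : ℝ) * (2 * π) * ((0 : I) : ℝ)) = 1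
    norm_num [Circle.exp_zero]
  target' := by
    show Circle.exp ((n : ℝ) * (2 * π) * ((1 : I) : ℝ)) = 1
    norm_num [Circle.exp_int_mul_two_pi]

lemma deg_loopN (n : ℤ) : deg (loopN n) = n := by
  apply deg_eq (g := fun t => (n : ℝ) * (2 * π) * t) (by fun_prop)
  · norm_num
  · intro t; rfl
  · norm_num

lemma homotopic_refl_of_deg_zero {p : Path (1 : Circle) 1} (h : deg p = 0) :
    p.Homotopic (Path.refl 1) := by
  obtain ⟨g, hc, h0, hl, h1⟩ := deg_spec p
  rw [h] at h1
  norm_num at h1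
  refine ⟨⟨⟨⟨fun z => Circle.exp ((1 - (z.1 : ℝ)) * g z.2), ?_⟩, ?_, ?_⟩, ?_⟩⟩
  · exact Circle.exp.continuous.comp
      ((continuous_const.sub (continuous_subtype_val.comp continuous_fst)).mul
        (hc.comp continuous_snd))
  · intro x
    show Circle.exp ((1 - ((0 : I) : ℝ)) * g x) = p x
    norm_num [hl x]
  · intro x
    show Circle.exp ((1 - ((1 : I) : ℝ)) * g x) = (Path.refl (1 : Circle)) x
    norm_num [Circle.exp_zero, Path.refl_apply]
  · intro t x hx
    rcases hx with hx | hx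
    · subst hx
      show Circle.exp ((1 - (t : ℝ)) * g 0) = p 0
      rw [h0, mul_zero, Circle.exp_zero, p.source]
    · rw [Set.mem_singleton_iff] at hx
      subst hx
      show Circle.exp ((1 - (t : ℝ)) * g 1) = p 1
      rw [h1, mul_zero, Circle.exp_zero, p.target]


attribute [local instance] Path.Homotopic.setoid

open CategoryTheory

/-- Degree descends to homotopy classes. -/
def deg2 : Path.Homotopic.Quotient (1 : Circle) 1 → ℤ :=
  Quotient.lift deg fun _ _ h => deg_congr h

lemma deg2_mk (p : Path (1 : Circle) 1) : deg2 ⟦p⟧ = deg p := rfl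

lemma deg2_comp (a b : Path.Homotopic.Quotient (1 : Circle) 1) :
    deg2 (a.trans b) = deg2 a + deg2 b := by
  induction a using Quotient.inductionOn with | h a =>
  induction b using Quotient.inductionOn with | h b =>
  show deg2 ⟦a.trans b⟧ = deg2 ⟦a⟧ + deg2 ⟦b⟧
  exact deg_trans a b

abbrev FG := Aut (⟨1⟩ : FundamentalGroupoid Circle)

/-- The degree homomorphism. -/
def degHom : FG →* Multiplicative ℤ where
  toFun x := Multiplicative.ofAdd (deg2 x.hom)
  map_one' := by
    show Multiplicative.ofAdd (deg2 (1 : FG).hom) = 1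
    have h1 : (1 : FG).hom = 𝟙 (⟨1⟩ : FundamentalGroupoid Circle) := rfl
    rw [h1, FundamentalGroupoid.id_eq_path_refl, deg2_mk, deg_refl]
    rfl
  map_mul' x y := by
    have hmul : (x * y).hom = y.hom ≫ x.hom := rfl
    simp only [hmul, FundamentalGroupoid.comp_eq, deg2_comp]
    rw [← ofAdd_add, add_comm]

lemma degHom_injective : Function.Injective degHom := by
  rw [injective_iff_map_eq_one]
  intro x hx
  have h0 : deg2 x.hom = 0 := by
    have := congrArg Multiplicative.toAdd hx
    exact this
  obtain ⟨p, hp⟩ := Quotient.exists_rep x.hom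
  have hdeg : deg p = 0 := by rw [← deg2_mk, hp]; exact h0
  have hhom : x.hom = 𝟙 (⟨1⟩ : FundamentalGroupoid Circle) := by
    rw [FundamentalGroupoid.id_eq_path_refl, ← hp]
    exact Quotient.sound (homotopic_refl_of_deg_zero hdeg)
  apply CategoryTheory.Iso.ext
  exact hhom

lemma degHom_apply (x : FG) : degHom x = Multiplicative.ofAdd (deg2 x.hom) := rfl

lemma degHom_surjective : Function.Surjective degHom := by
  intro n
  set z : FG := (CategoryTheory.Groupoid.isoEquivHom
      (⟨1⟩ : FundamentalGroupoid Circle) ⟨1⟩).symm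
      (⟦loopN n.toAdd⟧ : Path.Homotopic.Quotient (1 : Circle) 1) with hz
  refine ⟨z, ?_⟩
  rw [degHom_apply]
  have hh : z.hom = (⟦loopN n.toAdd⟧ : Path.Homotopic.Quotient (1 : Circle) 1) := rfl
  rw [hh, deg2_mk, deg_loopN]
  rfl

end CircleDeg

/-- The fundamental group of the circle (the unit circle in `ℂ`) based at `1`
is isomorphic to the additive group of integers. -/
theorem fundamentalGroup_circle_iso_int :
    Nonempty (FundamentalGroup Circle 1 ≃* Multiplicative ℤ) := by
  exact ⟨((toUnits : FundamentalGroup Circle 1 ≃* _).trans (CategoryTheory.Aut.unitsEndEquivAut _)).trans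
    (MulEquiv.ofBijective CircleDeg.degHom
    ⟨CircleDeg.degHom_injective, CircleDeg.degHom_surjective⟩)⟩
end CircleDeg
end
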